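/- Let n, r ≥ 1 and m ≥ 0 be integers. Then (1/(r!·n^r)) · Σ_{σ ∈ W(n,r)} (|Fix(σ)|/n)^m = Σ_{i=0}^{min(m,r)} S(m,i) · n^{−i}. In particular, if m ≤ r, this quantity equals the m-th moment of the Poisson distribution of mean 1/n, i.e. it equals Σ_{j=0}^{∞} j^m · e^{−1/n} · (1/n)^j / j!. -/

import Mathlib

/-- Stirling numbers of the second kind. -/
def stirling2 : ℕ → ℕ → ℕ
  | 0, 0 => 1
  | 0, _ + 1 => 0
  | _ + 1, 0 => 0
  | m + 1, i + 1 => (i + 1) * stirling2 m (i + 1) + stirling2 m i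

/-- The action of an element of the wreath product `C_n ≀ S_r` on `B(n,r)`. -/
def wAct (n r : ℕ) (σ : (Fin r → ZMod n) × Equiv.Perm (Fin r)) :
    ZMod n × Fin r → ZMod n × Fin r :=
  fun p => (σ.1 p.2 + p.1, σ.2 p.2)

/-- The number of fixed points of `σ ∈ C_n ≀ S_r` acting on `B(n,r)`. -/
noncomputable def fixCount (n r : ℕ) (σ : (Fin r → ZMod n) × Equiv.Perm (Fin r)) : ℕ :=
  Nat.card {p : ZMod n × Fin r // wAct n r σ p = p}

section aux

abbrev WP (n r : ℕ) := (Fin r → ZMod n) × Equiv.Perm (Fin r)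

lemma stirling2_zero_right : ∀ m, stirling2 (m+1) 0 = 0 := fun _ => rfl

lemma stirling2_eq_zero : ∀ {m i : ℕ}, m < i → stirling2 m i = 0 := by
  intro m
  induction m with
  | zero => intro i h; cases i with
    | zero => omega
    | succ i => rfl
  | succ m ih => intro i h; cases i with
    | zero => omega
    | succ i =>
      show (i + 1) * stirling2 m (i + 1) + stirling2 m i = 0
      rw [ih (by omega), ih (by omega)]; ring

lemma pow_eq_sum_stirling (m k : ℕ) :
    k ^ m = ∑ i ∈ Finset.range (m+1), stirling2 m i * k.descFactorial i := by
  induction m with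
  | zero => simp [stirling2]
  | succ m ih =>
    have key : ∀ i, k * k.descFactorial i = k.descFactorial (i+1) + i * k.descFactorial i := by
      intro i
      rw [Nat.descFactorial_succ]
      rcases le_or_gt i k with h | h
      · rw [← Nat.add_mul]; congr 1; omega
      · rw [Nat.descFactorial_eq_zero_iff_lt.2 h]; ring
    have : k ^ (m+1) = ∑ i ∈ Finset.range (m+1),
        (stirling2 m i * k.descFactorial (i+1) + stirling2 m i * (i * k.descFactorial i)) := by
      rw [pow_succ, mul_comm, ih, Finset.mul_sum]
      refine Finset.sum_congr rfl fun i _ => ?_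
      rw [mul_left_comm, key i]; ring
    rw [this, Finset.sum_add_distrib]
    rw [Finset.sum_range_succ' (fun i => stirling2 (m+1) i * k.descFactorial i) (m+1)]
    have h0 : stirling2 (m+1) 0 * k.descFactorial 0 = 0 := by rw [stirling2_zero_right]; ring
    rw [h0, add_zero]
    have hS : ∀ i, stirling2 (m+1) (i+1) = (i+1) * stirling2 m (i+1) + stirling2 m i := fun _ => rfl
    have expand : ∑ i ∈ Finset.range (m+1), stirling2 (m+1) (i+1) * k.descFactorial (i+1)
        = ∑ i ∈ Finset.range (m+1), ((i+1) * stirling2 m (i+1) * k.descFactorial (i+1)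
            + stirling2 m i * k.descFactorial (i+1)) := by
      refine Finset.sum_congr rfl fun i _ => ?_
      rw [hS]; ring
    rw [expand, Finset.sum_add_distrib, add_comm
      (∑ i ∈ Finset.range (m+1), (i+1) * stirling2 m (i+1) * k.descFactorial (i+1))]
    congr 1
    rw [Finset.sum_range_succ' (fun i => stirling2 m i * (i * k.descFactorial i)) m]
    rw [Finset.sum_range_succ (fun i => (i+1) * stirling2 m (i+1) * k.descFactorial (i+1)) m]
    rw [stirling2_eq_zero (by omega : m < m + 1)]
    simp [mul_comm, mul_assoc, mul_left_comm]
/-- number of fixed "slots" -/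
def fC (n r : ℕ) (σ : WP n r) : ℕ := Fintype.card {i : Fin r // σ.2 i = i ∧ σ.1 i = 0}

lemma fixCount_eq (n r : ℕ) [NeZero n] (σ : WP n r) : fixCount n r σ = n * fC n r σ := by
  have e1 : {p : ZMod n × Fin r // wAct n r σ p = p}
      ≃ {p : ZMod n × Fin r // σ.2 p.2 = p.2 ∧ σ.1 p.2 = 0} := by
    refine Equiv.subtypeEquivRight fun p => ?_
    unfold wAct
    rw [Prod.ext_iff]
    constructor
    · rintro ⟨h1, h2⟩; exact ⟨h2, by simpa using h1⟩
    · rintro ⟨h1, h2⟩; exact ⟨by simp [h2], h1⟩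
  have e2 : {p : ZMod n × Fin r // σ.2 p.2 = p.2 ∧ σ.1 p.2 = 0}
      ≃ ZMod n × {i : Fin r // σ.2 i = i ∧ σ.1 i = 0} :=
    { toFun := fun x => (x.1.1, ⟨x.1.2, x.2⟩)
      invFun := fun y => ⟨(y.1, y.2.1), y.2.2⟩
      left_inv := fun x => rfl
      right_inv := fun y => rfl }
  rw [fixCount, Nat.card_congr (e1.trans e2), Nat.card_prod, Nat.card_eq_fintype_card,
    Nat.card_eq_fintype_card, ZMod.card]
  rfl

section counting
variable {n r : ℕ} [NeZero n] {t : ℕ} (g : Fin t ↪ Fin r)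

lemma filter_card (g : Fin t ↪ Fin r) :
    (Finset.univ.filter fun a : Fin r => ∃ j, g j = a).card = t := by
  have : (Finset.univ.filter fun a : Fin r => ∃ j, g j = a) = Finset.univ.image g := by
    ext a; simp [Finset.mem_image]
  rw [this, Finset.card_image_of_injective _ g.injective, Finset.card_univ, Fintype.card_fin]

lemma cardF (g : Fin t ↪ Fin r) :
    Fintype.card {f : Fin r → ZMod n // ∀ j, f (g j) = 0} = n ^ (r - t) := by
  have e1 : {f : Fin r → ZMod n // ∀ j, f (g j) = 0}
      ≃ {f : Fin r → ZMod n // ∀ a, (∃ j, g j = a) → f a = 0} := by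
    refine Equiv.subtypeEquivRight fun f => ?_
    constructor
    · rintro h a ⟨j, rfl⟩; exact h j
    · intro h j; exact h _ ⟨j, rfl⟩
  have e2 := Equiv.subtypePiEquivPi (p := fun (a : Fin r) (z : ZMod n) => (∃ j, g j = a) → z = 0)
  rw [Fintype.card_congr (e1.trans e2), Fintype.card_pi]
  have hcard : ∀ a : Fin r, Fintype.card {z : ZMod n // (∃ j, g j = a) → z = 0}
      = if (∃ j, g j = a) then 1 else n := by
    intro a
    by_cases hC : ∃ j, g j = a
    · rw [if_pos hC]
      have : {z : ZMod n // (∃ j, g j = a) → z = 0} ≃ {z : ZMod n // z = 0} :=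
        Equiv.subtypeEquivRight fun z => by simp [hC]
      rw [Fintype.card_congr this, Fintype.card_subtype_eq]
    · rw [if_neg hC]
      have : {z : ZMod n // (∃ j, g j = a) → z = 0} ≃ ZMod n :=
        Equiv.subtypeUnivEquiv fun z h => absurd h hC
      rw [Fintype.card_congr this, ZMod.card]
  calc ∏ a : Fin r, Fintype.card {z : ZMod n // (∃ j, g j = a) → z = 0}
      = ∏ a : Fin r, if (∃ j, g j = a) then 1 else n := by
        exact Finset.prod_congr rfl fun a _ => hcard a
    _ = n ^ (r - t) := by
        rw [Finset.prod_ite, Finset.prod_const, Finset.prod_const, one_pow, one_mul]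
        congr 1
        have := Finset.card_filter_add_card_filter_not
          (s := (Finset.univ : Finset (Fin r))) (p := fun a => ∃ j, g j = a)
        rw [filter_card g] at this
        simp only [Finset.card_univ, Fintype.card_fin] at this
        omega

lemma cardP (g : Fin t ↪ Fin r) :
    Fintype.card {π : Equiv.Perm (Fin r) // ∀ j, π (g j) = g j} = (r - t).factorial := by
  have e1 : {π : Equiv.Perm (Fin r) // ∀ a : Fin r, ¬¬(∃ j, g j = a) → π a = a}
      ≃ {π : Equiv.Perm (Fin r) // ∀ j, π (g j) = g j} := by
    refine Equiv.subtypeEquivRight fun π => ?_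
    constructor
    · intro h j; exact h _ (not_not.2 ⟨j, rfl⟩)
    · intro h a ha; obtain ⟨j, rfl⟩ := not_not.1 ha; exact h j
  have e2 := (Equiv.Perm.subtypeEquivSubtypePerm
    (fun a : Fin r => ¬∃ j, g j = a)).trans e1
  rw [← Fintype.card_congr e2, Fintype.card_perm]
  congr 1
  rw [Fintype.card_subtype_compl, Fintype.card_fin]
  congr 1
  rw [Fintype.card_subtype, filter_card g]

noncomputable def bigEquiv (n r t : ℕ) [NeZero n] :
    (Σ _σ : WP n r, (Fin t ↪ {i : Fin r // _σ.2 i = i ∧ _σ.1 i = 0}))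
      ≃ (Σ g : Fin t ↪ Fin r,
          {f : Fin r → ZMod n // ∀ j, f (g j) = 0} × {π : Equiv.Perm (Fin r) // ∀ j, π (g j) = g j}) where
  toFun x := ⟨x.2.trans (Function.Embedding.subtype _),
    ⟨x.1.1, fun j => (x.2 j).2.2⟩, ⟨x.1.2, fun j => (x.2 j).2.1⟩⟩
  invFun y := ⟨(y.2.1.1, y.2.2.1),
    ⟨fun j => ⟨y.1 j, y.2.2.2 j, y.2.1.2 j⟩,
     fun a b h => y.1.injective (congrArg Subtype.val h)⟩⟩
  left_inv x := rfl
  right_inv y := rfl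

lemma sum_descFactorial (n r : ℕ) [NeZero n] (t : ℕ) :
    ∑ σ : WP n r, (fC n r σ).descFactorial t
      = r.descFactorial t * ((r - t).factorial * n ^ (r - t)) := by
  have step1 : ∀ σ : WP n r, (fC n r σ).descFactorial t
      = Fintype.card (Fin t ↪ {i : Fin r // σ.2 i = i ∧ σ.1 i = 0}) := by
    intro σ
    rw [Fintype.card_embedding_eq, Fintype.card_fin]
    rfl
  calc ∑ σ : WP n r, (fC n r σ).descFactorial t
      = ∑ σ : WP n r, Fintype.card (Fin t ↪ {i : Fin r // σ.2 i = i ∧ σ.1 i = 0}) :=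
        Finset.sum_congr rfl fun σ _ => step1 σ
    _ = Fintype.card (Σ _σ : WP n r, (Fin t ↪ {i : Fin r // _σ.2 i = i ∧ _σ.1 i = 0})) :=
        (Fintype.card_sigma).symm
    _ = Fintype.card (Σ g : Fin t ↪ Fin r,
          {f : Fin r → ZMod n // ∀ j, f (g j) = 0}
            × {π : Equiv.Perm (Fin r) // ∀ j, π (g j) = g j}) :=
        Fintype.card_congr (bigEquiv n r t)
    _ = ∑ g : Fin t ↪ Fin r, Fintype.card
          ({f : Fin r → ZMod n // ∀ j, f (g j) = 0}
            × {π : Equiv.Perm (Fin r) // ∀ j, π (g j) = g j}) := Fintype.card_sigma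
    _ = ∑ _g : Fin t ↪ Fin r, (n ^ (r - t) * (r - t).factorial) := by
        refine Finset.sum_congr rfl fun g _ => ?_
        rw [Fintype.card_prod, cardF g, cardP g]
    _ = r.descFactorial t * ((r - t).factorial * n ^ (r - t)) := by
        rw [Finset.sum_const, Finset.card_univ, Fintype.card_embedding_eq, Fintype.card_fin,
          Fintype.card_fin, smul_eq_mul]
        ring

end counting

lemma stirling2_zero' : ∀ m, stirling2 (m+1) 0 = 0 := fun _ => rfl

lemma main_nat (n r : ℕ) [NeZero n] (m : ℕ) :
    ∑ σ : WP n r, (fC n r σ) ^ m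
      = ∑ i ∈ Finset.range (min m r + 1), stirling2 m i * (r.factorial * n ^ (r - i)) := by
  have h1 : ∑ σ : WP n r, (fC n r σ) ^ m
      = ∑ i ∈ Finset.range (m + 1),
          stirling2 m i * (r.descFactorial i * ((r - i).factorial * n ^ (r - i))) := by
    calc ∑ σ : WP n r, (fC n r σ) ^ m
        = ∑ σ : WP n r, ∑ i ∈ Finset.range (m + 1),
            stirling2 m i * (fC n r σ).descFactorial i :=
          Finset.sum_congr rfl fun σ _ => pow_eq_sum_stirling m (fC n r σ)
      _ = ∑ i ∈ Finset.range (m + 1), ∑ σ : WP n r,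
            stirling2 m i * (fC n r σ).descFactorial i := Finset.sum_comm
      _ = ∑ i ∈ Finset.range (m + 1),
            stirling2 m i * (r.descFactorial i * ((r - i).factorial * n ^ (r - i))) := by
          refine Finset.sum_congr rfl fun i _ => ?_
          rw [← Finset.mul_sum, sum_descFactorial n r i]
  rw [h1]
  rw [← Finset.sum_subset (Finset.range_subset_range.2 (by omega : min m r + 1 ≤ m + 1))
    (fun i hmem hi => ?_)]
  · refine Finset.sum_congr rfl fun i hi => ?_
    rw [Finset.mem_range] at hi
    have hir : i ≤ r := by omega
    congr 1
    rw [← Nat.factorial_mul_descFactorial hir]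
    ring
  · rw [Finset.mem_range, not_lt] at hi
    rw [Finset.mem_range] at hmem
    have : r < i := by omega
    rw [Nat.descFactorial_eq_zero_iff_lt.2 this]
    ring

lemma descfact_div_fact : ∀ (i k : ℕ),
    ((Nat.descFactorial (k + i) i : ℕ) : ℝ) / ((k + i).factorial : ℕ)
      = 1 / (k.factorial : ℕ) := by
  intro i
  induction i with
  | zero => intro k; simp
  | succ i ih =>
    intro k
    have h1 : (k + (i+1)).descFactorial (i+1) = (k+1) * ((k+1) + i).descFactorial i := by
      rw [Nat.descFactorial_succ]
      congr 1
      · omega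
      · congr 1; omega
    have h2 : (k + (i+1)).factorial = ((k+1) + i).factorial := by congr 1; omega
    rw [h1, h2]
    push_cast
    rw [mul_div_assoc, ih (k+1)]
    rw [Nat.factorial_succ]
    push_cast
    field_simp

lemma poisson_shift (l : ℝ) (i k : ℕ) :
    ((Nat.descFactorial (k + i) i : ℕ) : ℝ) * l ^ (k + i) / ((k+i).factorial : ℕ)
      = l ^ i * (l ^ k / (k.factorial : ℕ)) := by
  have h := descfact_div_fact i k
  have : ((Nat.descFactorial (k + i) i : ℕ) : ℝ) * l ^ (k + i) / ((k+i).factorial : ℕ)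
      = (((Nat.descFactorial (k + i) i : ℕ) : ℝ) / ((k+i).factorial : ℕ)) * l ^ (k + i) := by
    ring
  rw [this, h, pow_add]
  ring

lemma poisson_summable (l : ℝ) (i : ℕ) :
    Summable (fun j : ℕ => ((Nat.descFactorial j i : ℕ) : ℝ) * l ^ j / (j.factorial : ℕ)) := by
  rw [← summable_nat_add_iff i]
  refine Summable.congr ((Real.summable_pow_div_factorial l).mul_left (l ^ i)) fun k => ?_
  exact (poisson_shift l i k).symm

lemma poisson_tsum (l : ℝ) (i : ℕ) :
    ∑' j : ℕ, ((Nat.descFactorial j i : ℕ) : ℝ) * l ^ j / (j.factorial : ℕ)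
      = l ^ i * Real.exp l := by
  rw [← (poisson_summable l i).sum_add_tsum_nat_add i]
  have h0 : ∑ j ∈ Finset.range i, ((Nat.descFactorial j i : ℕ) : ℝ) * l ^ j / (j.factorial : ℕ) = 0 := by
    refine Finset.sum_eq_zero fun j hj => ?_
    rw [Finset.mem_range] at hj
    rw [Nat.descFactorial_eq_zero_iff_lt.2 hj]
    simp
  rw [h0, zero_add]
  have : ∀ k : ℕ, ((Nat.descFactorial (k + i) i : ℕ) : ℝ) * l ^ (k + i) / ((k+i).factorial : ℕ)
      = l ^ i * (l ^ k / (k.factorial : ℕ)) := poisson_shift l i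
  rw [tsum_congr this, tsum_mul_left]
  congr 1
  rw [Real.exp_eq_exp_ℝ, NormedSpace.exp_eq_tsum_div]

lemma poisson_moment (l : ℝ) (m : ℕ) :
    ∑' j : ℕ, (j : ℝ) ^ m * (Real.exp (-l) * l ^ j / (j.factorial : ℝ))
      = ∑ i ∈ Finset.range (m + 1), (stirling2 m i : ℝ) * l ^ i := by
  have hcast : ∀ j : ℕ, ((j : ℝ)) ^ m
      = ∑ i ∈ Finset.range (m + 1), (stirling2 m i : ℝ) * ((Nat.descFactorial j i : ℕ) : ℝ) := by
    intro j
    have := pow_eq_sum_stirling m j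
    exact_mod_cast congrArg (fun x : ℕ => (x : ℝ)) this
  have hterm : ∀ j : ℕ, (j : ℝ) ^ m * (Real.exp (-l) * l ^ j / (j.factorial : ℝ))
      = Real.exp (-l) * ∑ i ∈ Finset.range (m + 1),
          (stirling2 m i : ℝ) * (((Nat.descFactorial j i : ℕ) : ℝ) * l ^ j / (j.factorial : ℝ)) := by
    intro j
    rw [hcast j, Finset.sum_mul, Finset.mul_sum]
    refine Finset.sum_congr rfl fun i _ => ?_
    ring
  rw [tsum_congr hterm, tsum_mul_left, Summable.tsum_finsetSum
    (fun i _ => (poisson_summable l i).mul_left ((stirling2 m i : ℝ)))]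
  have : ∀ i ∈ Finset.range (m + 1),
      ∑' j : ℕ, (stirling2 m i : ℝ) * (((Nat.descFactorial j i : ℕ) : ℝ) * l ^ j / (j.factorial : ℝ))
        = (stirling2 m i : ℝ) * (l ^ i * Real.exp l) := by
    intro i _
    rw [tsum_mul_left, poisson_tsum l i]
  rw [Finset.sum_congr rfl this, Finset.mul_sum]
  refine Finset.sum_congr rfl fun i _ => ?_
  rw [Real.exp_neg]
  field_simp

end aux

theorem stmt2 (n r : ℕ) [NeZero n] (hr : 1 ≤ r) (m : ℕ) :
    ((1 / ((r.factorial * n ^ r : ℕ) : ℝ)) *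
      ∑ σ : (Fin r → ZMod n) × Equiv.Perm (Fin r), ((fixCount n r σ : ℝ) / (n : ℝ)) ^ m
      = ∑ i ∈ Finset.range (min m r + 1), (stirling2 m i : ℝ) * ((n : ℝ)⁻¹) ^ i) ∧
    (m ≤ r →
      (1 / ((r.factorial * n ^ r : ℕ) : ℝ)) *
        ∑ σ : (Fin r → ZMod n) × Equiv.Perm (Fin r), ((fixCount n r σ : ℝ) / (n : ℝ)) ^ m
        = ∑' j : ℕ, (j : ℝ) ^ m * (Real.exp (-(1 / (n : ℝ))) * (1 / (n : ℝ)) ^ j / (j.factorial : ℝ))) := by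
  have hne : (n : ℝ) ≠ 0 := Nat.cast_ne_zero.2 (NeZero.ne n)
  have part1 : (1 / ((r.factorial * n ^ r : ℕ) : ℝ)) *
      ∑ σ : (Fin r → ZMod n) × Equiv.Perm (Fin r), ((fixCount n r σ : ℝ) / (n : ℝ)) ^ m
      = ∑ i ∈ Finset.range (min m r + 1), (stirling2 m i : ℝ) * ((n : ℝ)⁻¹) ^ i := by
    have hfix : ∀ σ : WP n r, ((fixCount n r σ : ℝ) / (n : ℝ)) = (fC n r σ : ℝ) := by
      intro σ
      rw [fixCount_eq]
      push_cast
      field_simp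
    have hsum : ∑ σ : WP n r, ((fixCount n r σ : ℝ) / (n : ℝ)) ^ m
        = ((∑ σ : WP n r, (fC n r σ) ^ m : ℕ) : ℝ) := by
      push_cast
      exact Finset.sum_congr rfl fun σ _ => by rw [hfix]
    rw [hsum, main_nat n r m]
    push_cast
    rw [Finset.mul_sum]
    refine Finset.sum_congr rfl fun i hi => ?_
    rw [Finset.mem_range] at hi
    have hir : i ≤ r := by omega
    have hp : (n : ℝ) ^ (r - i) * (n : ℝ) ^ i = (n : ℝ) ^ r := by
      rw [← pow_add]; congr 1; omega
    rw [← hp]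
    have h1 : (r.factorial : ℝ) ≠ 0 := Nat.cast_ne_zero.2 r.factorial_ne_zero
    have h2 : (n : ℝ) ^ i ≠ 0 := pow_ne_zero _ hne
    have h3 : (n : ℝ) ^ (r - i) ≠ 0 := pow_ne_zero _ hne
    field_simp
    rw [one_div_pow, mul_comm ((n:ℝ)^i), mul_assoc, mul_one_div_cancel h2, mul_one]
  refine ⟨part1, fun hm => ?_⟩
  rw [part1, min_eq_left hm, poisson_moment (1 / (n : ℝ)) m]
  refine Finset.sum_congr rfl fun i _ => ?_
  rw [one_div]
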